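/- Let F ⊆ F_2^24 be a set of 2^12 binary words of length 24, all of even Hamming weight, with pairwise Hamming distances at least 8, and such that every word of F_2^24 is at Hamming distance at most 4 from F (an extended binary Golay code). Then the distance coloring T, assigning to each word its Hamming distance to F, is a perfect coloring of the distance-2 graph HH(24) with parameter matrix (rows and columns indexed by colors 0,…,4): row 0 = (0,0,276,0,0), row 1 = (0,23,0,253,0), row 2 = (1,0,44,0,231), row 3 = (0,3,0,273,0), row 4 = (0,0,36,0,240). -/

import Mathlib

/-- Binary words of length `n`. -/
abbrev Word (n : ℕ) := Fin n → ZMod 2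

/-- The Hamming distance from a word `v` to a code `F ⊆ F_2^n`. -/
noncomputable def distTo {n : ℕ} (F : Set (Word n)) (v : Word n) : ℕ :=
  sInf (hammingDist v '' F)

/-- The parameter matrix of the distance coloring of the Golay code in `HH(24)`. -/
def golayMatrixHH : Matrix (Fin 5) (Fin 5) ℕ :=
  !![0,  0, 276,   0,   0;
     0, 23,   0, 253,   0;
     1,  0,  44,   0, 231;
     0,  3,   0, 273,   0;
     0,  0,  36,   0, 240]

open Finset
open scoped symmDiff

namespace GolayAux

variable {n : ℕ}

@[simp] lemma zmod2_two : (1 + 1 : ZMod 2) = 0 := by decide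

lemma zmod2_cases (a : ZMod 2) : a = 0 ∨ a = 1 := by revert a; decide

/-- support of a word as a Finset -/
def spt (x : Word n) : Finset (Fin n) := {i | x i ≠ 0}

def ind (s : Finset (Fin n)) : Word n := fun i => if i ∈ s then 1 else 0

@[simp] lemma mem_spt {x : Word n} {i : Fin n} : i ∈ spt x ↔ x i ≠ 0 := by
  simp [spt]

@[simp] lemma spt_ind (s : Finset (Fin n)) : spt (ind s) = s := by
  ext i; by_cases h : i ∈ s <;> simp [ind, h]

@[simp] lemma ind_spt (x : Word n) : ind (spt x) = x := by
  funext i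
  rcases zmod2_cases (x i) with h | h <;> simp [ind, h]

lemma wt_eq (x : Word n) : hammingNorm x = (spt x).card := rfl

lemma dist_eq (x y : Word n) : hammingDist x y = (spt (x + y)).card := by
  unfold hammingDist
  congr 1
  ext i
  simp only [mem_spt, Pi.add_apply]
  rcases zmod2_cases (x i) with h | h <;> rcases zmod2_cases (y i) with h' | h' <;>
    simp [h, h']

lemma spt_add (x y : Word n) : spt (x + y) = spt x ∆ spt y := by
  ext i
  rcases zmod2_cases (x i) with h | h <;> rcases zmod2_cases (y i) with h' | h' <;>
    simp [Finset.mem_symmDiff, h, h']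

lemma dist_add_left (u x y : Word n) : hammingDist (u + x) (u + y) = hammingDist x y := by
  rw [dist_eq, dist_eq]
  congr 1
  ext i
  simp only [mem_spt, Pi.add_apply]
  rcases zmod2_cases (u i) with h | h <;> rcases zmod2_cases (x i) with h1 | h1 <;>
    rcases zmod2_cases (y i) with h2 | h2 <;> simp [h, h1, h2]

end GolayAux

namespace GolayAux

variable {n : ℕ}

lemma word_add_self (x : Word n) : x + x = 0 := by
  funext i
  rcases zmod2_cases (x i) with h | h <;> simp [h]

lemma word_add_cancel (x y : Word n) : x + (x + y) = y := by
  rw [← add_assoc, word_add_self, zero_add]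

lemma wdist_add_right (x y : Word n) : hammingDist x (x + y) = hammingNorm y := by
  rw [dist_eq, word_add_cancel, wt_eq]

lemma card_sphere (v : Word n) (k : ℕ) :
    (univ.filter fun w : Word n => hammingDist v w = k).card = n.choose k := by
  have h : (univ.filter fun w : Word n => hammingDist v w = k).card
      = ((univ : Finset (Fin n)).powersetCard k).card := by
    apply card_nbij' (fun w => spt (v + w)) (fun s => v + ind s)
    · intro w hw
      simp only [Finset.mem_coe, mem_filter, mem_powersetCard] at *
      exact ⟨subset_univ _, by rw [← dist_eq]; exact hw.2⟩
    · intro s hs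
      simp only [Finset.mem_coe, mem_filter, mem_powersetCard] at *
      refine ⟨mem_univ _, ?_⟩
      rw [dist_eq, word_add_cancel, spt_ind, hs.2]
    · intro w _
      beta_reduce
      rw [ind_spt, word_add_cancel]
    · intro s hs
      beta_reduce
      rw [word_add_cancel, spt_ind]
  rw [h, card_powersetCard, card_univ, Fintype.card_fin]

lemma card_symmDiff (s t : Finset (Fin n)) :
    (s ∆ t).card + 2 * (s ∩ t).card = s.card + t.card := by
  have h1 : (s ∆ t) = (s \ t) ∪ (t \ s) := by
    ext i; simp [Finset.mem_symmDiff]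
  have h2 : (s \ t).card + (s ∩ t).card = s.card := card_sdiff_add_card_inter s t
  have h3 : (t \ s).card + (t ∩ s).card = t.card := card_sdiff_add_card_inter t s
  have h4 : ((s \ t) ∪ (t \ s)).card = (s \ t).card + (t \ s).card :=
    card_union_of_disjoint disjoint_sdiff_sdiff
  rw [h1, h4, inter_comm t s] at *
  omega

lemma card_inter_filter (A : Finset (Fin n)) (k t : ℕ) (ht : t ≤ k) :
    (((univ : Finset (Fin n)).powersetCard k).filter fun s => (s ∩ A).card = t).card
      = A.card.choose t * (n - A.card).choose (k - t) := by
  have h : (((univ : Finset (Fin n)).powersetCard k).filter fun s => (s ∩ A).card = t).card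
      = ((A.powersetCard t) ×ˢ (Aᶜ.powersetCard (k - t))).card := by
    apply card_nbij' (fun s => (s ∩ A, s \ A)) (fun p => p.1 ∪ p.2)
    · intro s hs
      simp only [Finset.mem_coe, mem_filter, mem_powersetCard, mem_product] at *
      obtain ⟨⟨-, hcard⟩, hint⟩ := hs
      have h2 : (s \ A).card + (s ∩ A).card = s.card := card_sdiff_add_card_inter s A
      refine ⟨⟨inter_subset_right, hint⟩, fun i hi => ?_, by omega⟩
      simp only [mem_sdiff] at hi
      simpa using hi.2
    · intro p hp
      simp only [Finset.mem_coe, mem_filter, mem_powersetCard, mem_product] at *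
      obtain ⟨⟨ha, hat⟩, hb, hbt⟩ := hp
      have hnA : ∀ i ∈ p.2, i ∉ A := fun i hi => by simpa using hb hi
      have hdisj : Disjoint p.1 p.2 := by
        rw [Finset.disjoint_left]
        intro i hi hi2
        exact hnA i hi2 (ha hi)
      have huA : (p.1 ∪ p.2) ∩ A = p.1 := by
        ext i
        simp only [mem_inter, mem_union]
        constructor
        · rintro ⟨hi1 | hi2, hiA⟩
          · exact hi1
          · exact absurd hiA (hnA i hi2)
        · intro hi
          exact ⟨Or.inl hi, ha hi⟩
      refine ⟨⟨subset_univ _, ?_⟩, by rw [huA, hat]⟩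
      rw [card_union_of_disjoint hdisj, hat, hbt]
      omega
    · intro s _
      ext i
      simp only [mem_union, mem_inter, mem_sdiff]
      tauto
    · intro p hp
      simp only [Finset.mem_coe, mem_product, mem_powersetCard] at hp
      obtain ⟨⟨ha, hat⟩, hb, hbt⟩ := hp
      have hnA : ∀ i ∈ p.2, i ∉ A := fun i hi => by simpa using hb hi
      have h1 : (p.1 ∪ p.2) ∩ A = p.1 := by
        ext i
        simp only [mem_inter, mem_union]
        constructor
        · rintro ⟨hi1 | hi2, hiA⟩
          · exact hi1
          · exact absurd hiA (hnA i hi2)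
        · intro hi
          exact ⟨Or.inl hi, ha hi⟩
      have h2 : (p.1 ∪ p.2) \ A = p.2 := by
        ext i
        simp only [mem_sdiff, mem_union]
        constructor
        · rintro ⟨hi1 | hi2, hiA⟩
          · exact absurd (ha hi1) hiA
          · exact hi2
        · intro hi
          exact ⟨Or.inr hi, hnA i hi⟩
      beta_reduce
      rw [h1, h2]
  rw [h, card_product, card_powersetCard, card_powersetCard, card_compl, Fintype.card_fin]

end GolayAux

namespace GolayAux

variable {F : Set (Word 24)}

lemma distTo_le {u : Word 24} (hu : u ∈ F) (v : Word 24) :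
    distTo F v ≤ hammingDist v u :=
  Nat.sInf_le ⟨u, hu, rfl⟩

lemma exists_attain (hne : F.Nonempty) (v : Word 24) :
    ∃ u ∈ F, hammingDist v u = distTo F v := by
  have h : distTo F v ∈ hammingDist v '' F := Nat.sInf_mem (hne.image _)
  obtain ⟨u, hu, h⟩ := h
  exact ⟨u, hu, h⟩

lemma distTo_le_four (hcov : ∀ v : Word 24, ∃ u ∈ F, hammingDist v u ≤ 4) (v : Word 24) :
    distTo F v ≤ 4 := by
  obtain ⟨u, hu, h⟩ := hcov v
  exact le_trans (distTo_le hu v) h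

lemma mem_of_distTo_eq_zero (hne : F.Nonempty) {v : Word 24} (h : distTo F v = 0) : v ∈ F := by
  obtain ⟨u, hu, hd⟩ := exists_attain hne v
  rw [h, hammingDist_eq_zero] at hd
  rwa [hd]

lemma code_eq (hdist : ∀ u ∈ F, ∀ v ∈ F, u ≠ v → 8 ≤ hammingDist u v)
    {u u' : Word 24} (hu : u ∈ F) (hu' : u' ∈ F) (h : hammingDist u u' < 8) : u = u' := by
  by_contra hne
  exact absurd (hdist u hu u' hu' hne) (by omega)

lemma even_tri (a b c : Word 24) :
    (hammingDist a b + hammingDist a c + hammingDist b c) % 2 = 0 := by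
  have h1 : a + b = (a + c) + (c + b) := by
    rw [add_assoc, word_add_cancel]
  have h2 : hammingDist a b = (spt (a + c) ∆ spt (c + b)).card := by
    rw [dist_eq, h1, spt_add]
  have h3 := card_symmDiff (spt (a + c)) (spt (c + b))
  rw [← dist_eq, ← dist_eq, hammingDist_comm c b] at h3
  omega

lemma parity_key (hne : F.Nonempty) (heven : ∀ u ∈ F, Even (hammingDist u 0))
    (v w : Word 24) :
    (distTo F v + distTo F w + hammingDist v w) % 2 = 0 := by
  obtain ⟨u, hu, hduv⟩ := exists_attain hne v
  obtain ⟨u', hu', hduw⟩ := exists_attain hne w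
  have h1 := even_tri v w u
  have h2 := even_tri w u u'
  have h3 := even_tri u u' 0
  have h4 := (heven u hu).add (heven u' hu')
  rw [Nat.even_iff] at h4
  rw [hammingDist_comm v u, hammingDist_comm w u'] at *
  omega

lemma distTo_close (hdist : ∀ u ∈ F, ∀ v ∈ F, u ≠ v → 8 ≤ hammingDist u v)
    (hne : F.Nonempty) {u v : Word 24} (hu : u ∈ F) (hk : hammingDist v u ≤ 3) :
    distTo F v = hammingDist v u := by
  obtain ⟨u', hu', hd⟩ := exists_attain hne v
  have hle : distTo F v ≤ hammingDist v u := distTo_le hu v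
  have h8 : hammingDist u u' < 8 := by
    have := hammingDist_triangle u v u'
    rw [hammingDist_comm u v] at this
    omega
  rw [← code_eq hdist hu hu' h8] at hd
  omega

lemma near_unique (hdist : ∀ u ∈ F, ∀ v ∈ F, u ≠ v → 8 ≤ hammingDist u v)
    {u u' v : Word 24} (hu : u ∈ F) (hu' : u' ∈ F)
    (h : hammingDist v u + hammingDist v u' < 8) : u = u' := by
  apply code_eq hdist hu hu'
  have := hammingDist_triangle u v u'
  rw [hammingDist_comm u v] at this
  omega

end GolayAux

namespace GolayAux

open scoped Classical

variable {F : Set (Word 24)}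

noncomputable def Dj (F : Set (Word 24)) (j : ℕ) : Finset (Word 24) :=
  univ.filter fun x => distTo F x = j

noncomputable def Ffin (F : Set (Word 24)) : Finset (Word 24) :=
  (Set.toFinite F).toFinset

noncomputable def Nv (F : Set (Word 24)) (v : Word 24) : Finset (Word 24) :=
  (Ffin F).filter fun u => hammingDist v u = 4

lemma mem_Ffin {u : Word 24} : u ∈ Ffin F ↔ u ∈ F := Set.Finite.mem_toFinset _

lemma Ffin_card (hcard : F.ncard = 2 ^ 12) : (Ffin F).card = 4096 := by
  rw [Ffin, ← Set.ncard_eq_toFinset_card _ (Set.toFinite F), hcard]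
  norm_num

lemma F_nonempty (hcard : F.ncard = 2 ^ 12) : F.Nonempty := by
  apply Set.nonempty_of_ncard_ne_zero
  rw [hcard]; norm_num

lemma Dj_card (hcard : F.ncard = 2 ^ 12)
    (hdist : ∀ u ∈ F, ∀ v ∈ F, u ≠ v → 8 ≤ hammingDist u v)
    {j : ℕ} (hj : j ≤ 3) : (Dj F j).card = 4096 * Nat.choose 24 j := by
  have hne := F_nonempty hcard
  have heq : Dj F j = (Ffin F).biUnion (fun u => univ.filter fun x => hammingDist u x = j) := by
    ext x
    simp only [Dj, mem_filter, mem_univ, true_and, mem_biUnion, mem_Ffin]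
    constructor
    · intro h
      obtain ⟨u, hu, hd⟩ := exists_attain hne x
      exact ⟨u, hu, by rw [hammingDist_comm]; omega⟩
    · rintro ⟨u, hu, hd⟩
      rw [hammingDist_comm] at hd
      rw [distTo_close hdist hne hu (by omega), hd]
  rw [heq, card_biUnion, ← Ffin_card hcard]
  · rw [Finset.sum_congr rfl fun u _ => card_sphere u j, sum_const, smul_eq_mul, mul_comm]
  · intro u hu u' hu' hne'
    rw [Function.onFun, Finset.disjoint_left]
    intro x hx hx'
    simp only [mem_filter, mem_univ, true_and] at hx hx'
    rw [Finset.mem_coe, mem_Ffin] at hu hu'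
    apply hne'
    apply near_unique hdist hu hu'
    rw [hammingDist_comm x u, hammingDist_comm x u']
    omega

lemma card_word : Fintype.card (Word 24) = 16777216 := by
  rw [Fintype.card_fun]
  rfl

lemma D4_card (hcard : F.ncard = 2 ^ 12)
    (hdist : ∀ u ∈ F, ∀ v ∈ F, u ≠ v → 8 ≤ hammingDist u v)
    (hcov : ∀ v : Word 24, ∃ u ∈ F, hammingDist v u ≤ 4) :
    (Dj F 4).card = 7254016 := by
  have hsum : (univ : Finset (Word 24)).card
      = ∑ j ∈ range 5, (univ.filter fun x : Word 24 => distTo F x = j).card := by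
    apply card_eq_sum_card_fiberwise
    intro x _
    rw [Finset.mem_coe, mem_range]
    have := distTo_le_four hcov x
    omega
  rw [card_univ, card_word] at hsum
  have e0 := Dj_card hcard hdist (show 0 ≤ 3 by norm_num)
  have e1 := Dj_card hcard hdist (show 1 ≤ 3 by norm_num)
  have e2 := Dj_card hcard hdist (show 2 ≤ 3 by norm_num)
  have e3 := Dj_card hcard hdist (show 3 ≤ 3 by norm_num)
  simp only [Dj] at e0 e1 e2 e3
  rw [show (5:ℕ) = 4+1 by rfl, Finset.sum_range_succ, Finset.sum_range_succ,
    Finset.sum_range_succ, Finset.sum_range_succ, Finset.sum_range_one] at hsum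
  rw [e0, e1, e2, e3] at hsum
  simp only [Dj]
  rw [show Nat.choose 24 0 = 1 by rfl, show Nat.choose 24 1 = 24 by rfl,
    show Nat.choose 24 2 = 276 by rfl, show Nat.choose 24 3 = 2024 by decide] at hsum
  omega

end GolayAux

namespace GolayAux

open scoped Classical

variable {F : Set (Word 24)}

lemma Nv_card_le (hdist : ∀ u ∈ F, ∀ v ∈ F, u ≠ v → 8 ≤ hammingDist u v)
    (v : Word 24) : (Nv F v).card ≤ 6 := by
  have hdisj : ∀ u ∈ Nv F v, ∀ u' ∈ Nv F v, u ≠ u' →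
      Disjoint (spt (v + u)) (spt (v + u')) := by
    intro u hu u' hu' hne'
    simp only [Nv, mem_filter, mem_Ffin] at hu hu'
    have h8 : 8 ≤ hammingDist u u' := hdist u hu.1 u' hu'.1 hne'
    have he : u + u' = (v + u) + (v + u') := by
      rw [add_add_add_comm, word_add_self, zero_add]
    have hd : hammingDist u u' = (spt (v + u) ∆ spt (v + u')).card := by
      rw [dist_eq, he, spt_add]
    have hcs := card_symmDiff (spt (v + u)) (spt (v + u'))
    rw [← dist_eq, ← dist_eq, hu.2, hu'.2] at hcs
    rw [Finset.disjoint_iff_inter_eq_empty, ← Finset.card_eq_zero]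
    omega
  have hcb := Finset.card_biUnion hdisj
  have hle : ((Nv F v).biUnion fun u => spt (v + u)).card ≤ 24 := by
    have := Finset.card_le_card (Finset.subset_univ ((Nv F v).biUnion fun u => spt (v + u)))
    rwa [card_univ, Fintype.card_fin] at this
  rw [hcb] at hle
  have hsum : ∑ u ∈ Nv F v, (spt (v + u)).card = ∑ u ∈ Nv F v, 4 := by
    apply Finset.sum_congr rfl
    intro u hu
    simp only [Nv, mem_filter] at hu
    rw [← dist_eq, hu.2]
  rw [hsum, sum_const, smul_eq_mul] at hle
  omega

lemma Nv_empty (hdist : ∀ u ∈ F, ∀ v ∈ F, u ≠ v → 8 ≤ hammingDist u v)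
    (hne : F.Nonempty) {x : Word 24} (hx : distTo F x ≤ 3) : (Nv F x).card = 0 := by
  rw [Finset.card_eq_zero, Finset.eq_empty_iff_forall_notMem]
  intro u hu
  simp only [Nv, mem_filter, mem_Ffin] at hu
  obtain ⟨u', hu', hd⟩ := exists_attain hne x
  have := near_unique (v := x) hdist hu.1 hu' (by omega)
  rw [this] at hu
  omega

lemma sum_Nv (hcard : F.ncard = 2 ^ 12) :
    ∑ x : Word 24, (Nv F x).card = 43524096 := by
  have h1 : ∀ x : Word 24, (Nv F x).card = ∑ u ∈ Ffin F, if hammingDist x u = 4 then 1 else 0 := by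
    intro x
    rw [Nv, card_filter]
  simp_rw [h1]
  rw [Finset.sum_comm]
  have h2 : ∀ u ∈ Ffin F, (∑ x : Word 24, if hammingDist x u = 4 then 1 else 0) = 10626 := by
    intro u _
    rw [← card_filter]
    have : (univ.filter fun x : Word 24 => hammingDist x u = 4)
        = univ.filter fun x : Word 24 => hammingDist u x = 4 := by
      apply filter_congr
      intro x _
      rw [hammingDist_comm]
    rw [this, card_sphere]
    decide
  rw [Finset.sum_congr rfl h2, sum_const, smul_eq_mul, Ffin_card hcard]

lemma k6 (hcard : F.ncard = 2 ^ 12)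
    (hdist : ∀ u ∈ F, ∀ v ∈ F, u ≠ v → 8 ≤ hammingDist u v)
    (hcov : ∀ v : Word 24, ∃ u ∈ F, hammingDist v u ≤ 4)
    {v : Word 24} (hv : distTo F v = 4) : (Nv F v).card = 6 := by
  have hne := F_nonempty hcard
  have hsplit : ∑ x : Word 24, (Nv F x).card
      = ∑ x ∈ Dj F 4, (Nv F x).card := by
    rw [← Finset.sum_filter_add_sum_filter_not univ (fun x => distTo F x = 4)]
    have hz : ∑ x ∈ univ.filter (fun x => ¬ distTo F x = 4), (Nv F x).card = 0 := by
      apply Finset.sum_eq_zero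
      intro x hx
      simp only [mem_filter, mem_univ, true_and] at hx
      have h4 := distTo_le_four hcov x
      exact Nv_empty hdist hne (by omega)
    rw [hz, Dj]
    ring
  by_contra hlt
  have hle6 := Nv_card_le hdist v
  have hmem : v ∈ Dj F 4 := by simp [Dj, hv]
  have hstrict : ∑ x ∈ Dj F 4, (Nv F x).card < ∑ x ∈ Dj F 4, 6 := by
    apply Finset.sum_lt_sum
    · intro x _
      exact Nv_card_le hdist x
    · exact ⟨v, hmem, by omega⟩
  rw [sum_const, smul_eq_mul, D4_card hcard hdist hcov] at hstrict
  rw [← hsplit, sum_Nv hcard] at hstrict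
  omega

end GolayAux

namespace GolayAux

open scoped Classical

variable {F : Set (Word 24)}

noncomputable def T (F : Set (Word 24)) (v : Word 24) (j : ℕ) : Finset (Word 24) :=
  univ.filter fun w => hammingDist v w = 2 ∧ distTo F w = j

lemma ind_inj {n : ℕ} (u : Word n) :
    Function.Injective (fun s : Finset (Fin n) => u + ind s) := by
  intro s t h
  have h2 : ind s = ind t := add_left_cancel h
  rw [← spt_ind s, h2, spt_ind]

lemma Tsum (hcov : ∀ v : Word 24, ∃ u ∈ F, hammingDist v u ≤ 4) (v : Word 24) :
    (T F v 0).card + (T F v 1).card + (T F v 2).card + (T F v 3).card + (T F v 4).card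
      = 276 := by
  have hs : (univ.filter fun w : Word 24 => hammingDist v w = 2).card = 276 := by
    rw [card_sphere]; decide
  have hfib : (univ.filter fun w : Word 24 => hammingDist v w = 2).card
      = ∑ j ∈ range 5,
        ((univ.filter fun w : Word 24 => hammingDist v w = 2).filter
          fun w => distTo F w = j).card := by
    apply card_eq_sum_card_fiberwise
    intro x _
    rw [Finset.mem_coe, mem_range]
    have := distTo_le_four hcov x
    omega
  have hT : ∀ j : ℕ, ((univ.filter fun w : Word 24 => hammingDist v w = 2).filter
      fun w => distTo F w = j) = T F v j := by
    intro j
    rw [T, Finset.filter_filter]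
  simp_rw [hT] at hfib
  rw [show (5:ℕ) = 4+1 by rfl, Finset.sum_range_succ, Finset.sum_range_succ,
    Finset.sum_range_succ, Finset.sum_range_succ, Finset.sum_range_one] at hfib
  omega

lemma Tparity (hcard : F.ncard = 2 ^ 12) (heven : ∀ u ∈ F, Even (hammingDist u 0))
    {v : Word 24} {j : ℕ} (h : (distTo F v + j) % 2 = 1) : (T F v j).card = 0 := by
  rw [Finset.card_eq_zero, Finset.eq_empty_iff_forall_notMem]
  intro w hw
  simp only [T, mem_filter, mem_univ, true_and] at hw
  have hp := parity_key (F_nonempty hcard) heven v w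
  rw [hw.1, hw.2] at hp
  omega

lemma T_small (hdist : ∀ u ∈ F, ∀ v ∈ F, u ≠ v → 8 ≤ hammingDist u v)
    (hne : F.Nonempty) {u v : Word 24} (hu : u ∈ F) {i j t : ℕ}
    (hvu : hammingDist v u = i) (hj1 : 1 ≤ j) (hj : j ≤ 3) (h8 : i + j + 2 < 8)
    (ht : 2 + 2 * t = i + j) :
    T F v j = ((univ.powersetCard j).filter
        fun s => (s ∩ spt (v + u)).card = t).image (fun s => u + ind s) := by
  have hA : (spt (v + u)).card = i := by rw [← dist_eq, hvu]
  ext w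
  simp only [T, mem_filter, mem_univ, true_and, Finset.mem_image, mem_powersetCard]
  constructor
  · rintro ⟨hd2, hdj⟩
    obtain ⟨u', hu', hdw⟩ := exists_attain hne w
    rw [hdj] at hdw
    have huu' : u = u' := by
      apply near_unique (v := w) hdist hu hu'
      have htri := hammingDist_triangle w v u
      rw [hammingDist_comm w v] at htri
      omega
    rw [← huu'] at hdw
    refine ⟨spt (u + w), ⟨⟨subset_univ _, ?_⟩, ?_⟩, ?_⟩
    · rw [← dist_eq, hammingDist_comm]
      exact hdw
    · have hvw : spt (v + w) = spt (v + u) ∆ spt (u + w) := by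
        rw [← spt_add, ← add_assoc, add_assoc v u u, word_add_self, add_zero]
      have hcs := card_symmDiff (spt (v + u)) (spt (u + w))
      have hvwc : (spt (v + w)).card = 2 := by rw [← dist_eq]; exact hd2
      rw [← hvw] at hcs
      have hwc : (spt (u + w)).card = j := by rw [← dist_eq, hammingDist_comm]; exact hdw
      rw [Finset.inter_comm]
      omega
    · rw [ind_spt, word_add_cancel]
  · rintro ⟨s, ⟨⟨-, hsc⟩, hst⟩, rfl⟩
    have hdw : hammingDist (u + ind s) u = j := by
      rw [hammingDist_comm, wdist_add_right, wt_eq, spt_ind, hsc]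
    have hd2 : hammingDist v (u + ind s) = 2 := by
      have hvw : spt (v + (u + ind s)) = spt (v + u) ∆ s := by
        rw [← add_assoc, spt_add, spt_ind]
      have hcs := card_symmDiff (spt (v + u)) s
      rw [Finset.inter_comm] at hcs
      rw [dist_eq, hvw]
      omega
    refine ⟨hd2, ?_⟩
    rw [distTo_close hdist hne hu (by omega), hdw]

end GolayAux

namespace GolayAux

open scoped Classical

variable {F : Set (Word 24)}

lemma T2_row4 (hcard : F.ncard = 2 ^ 12)
    (hdist : ∀ u ∈ F, ∀ v ∈ F, u ≠ v → 8 ≤ hammingDist u v)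
    (hcov : ∀ v : Word 24, ∃ u ∈ F, hammingDist v u ≤ 4)
    {v : Word 24} (hv : distTo F v = 4) : (T F v 2).card = 36 := by
  have hne := F_nonempty hcard
  have hk := k6 hcard hdist hcov hv
  have heq : T F v 2 = (Nv F v).biUnion
      (fun u => ((spt (v + u)).powersetCard 2).image fun s => u + ind s) := by
    ext w
    simp only [T, mem_filter, mem_univ, true_and, mem_biUnion, Nv, mem_Ffin,
      Finset.mem_image, mem_powersetCard]
    constructor
    · rintro ⟨hd2, hdw⟩
      obtain ⟨u', hu', hd⟩ := exists_attain hne w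
      rw [hdw] at hd
      have hvu' : hammingDist v u' = 4 := by
        have htri := hammingDist_triangle v w u'
        have hle : distTo F v ≤ hammingDist v u' := distTo_le hu' v
        omega
      have hsplit : spt (v + w) = spt (v + u') ∆ spt (u' + w) := by
        rw [← spt_add, ← add_assoc, add_assoc v u' u', word_add_self, add_zero]
      have hcs := card_symmDiff (spt (v + u')) (spt (u' + w))
      rw [← hsplit] at hcs
      have h1 : (spt (v + w)).card = 2 := by rw [← dist_eq]; exact hd2
      have h2 : (spt (v + u')).card = 4 := by rw [← dist_eq]; exact hvu'
      have h3 : (spt (u' + w)).card = 2 := by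
        rw [← dist_eq, hammingDist_comm]; exact hd
      have hsub : spt (u' + w) ⊆ spt (v + u') := by
        rw [← Finset.inter_eq_left]
        apply Finset.eq_of_subset_of_card_le Finset.inter_subset_left
        rw [Finset.inter_comm]
        omega
      exact ⟨u', ⟨hu', hvu'⟩, spt (u' + w), ⟨hsub, h3⟩, by rw [ind_spt, word_add_cancel]⟩
    · rintro ⟨u, ⟨hu, hvu⟩, s, ⟨hsub, hsc⟩, rfl⟩
      have h2 : (spt (v + u)).card = 4 := by rw [← dist_eq]; exact hvu
      have hinter : (spt (v + u) ∩ s).card = 2 := by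
        rw [Finset.inter_eq_right.mpr hsub, hsc]
      have hcs := card_symmDiff (spt (v + u)) s
      have hdw : hammingDist (u + ind s) u = 2 := by
        rw [hammingDist_comm, wdist_add_right, wt_eq, spt_ind, hsc]
      constructor
      · rw [dist_eq, ← add_assoc, spt_add, spt_ind]
        omega
      · rw [distTo_close hdist hne hu (by omega), hdw]
  rw [heq, card_biUnion]
  · have hpc : ∀ u ∈ Nv F v,
        (((spt (v + u)).powersetCard 2).image fun s => u + ind s).card = 6 := by
      intro u hu
      simp only [Nv, mem_filter] at hu
      rw [Finset.card_image_of_injective _ (ind_inj u), card_powersetCard,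
        ← dist_eq, hu.2]
      decide
    rw [Finset.sum_congr rfl hpc, sum_const, smul_eq_mul, hk]
  · intro u hu u' hu' hne'
    rw [Function.onFun, Finset.disjoint_left]
    rintro w hw hw'
    simp only [Finset.mem_image, mem_powersetCard] at hw hw'
    obtain ⟨s, ⟨hs1, hs2⟩, rfl⟩ := hw
    obtain ⟨s', ⟨hs1', hs2'⟩, heq'⟩ := hw'
    apply hne'
    apply near_unique (v := u + ind s) hdist (mem_Ffin.mp (mem_filter.mp hu).1)
      (mem_Ffin.mp (mem_filter.mp hu').1)
    have hd1 : hammingDist (u + ind s) u = 2 := by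
      rw [hammingDist_comm, wdist_add_right, wt_eq, spt_ind, hs2]
    have hd2 : hammingDist (u + ind s) u' = 2 := by
      rw [← heq', hammingDist_comm, wdist_add_right, wt_eq, spt_ind, hs2']
    omega

end GolayAux

namespace GolayAux

open scoped Classical

variable {F : Set (Word 24)}

lemma ncard_T (v : Word 24) (j : ℕ) :
    {w | hammingDist v w = 2 ∧ distTo F w = j}.ncard = (T F v j).card := by
  rw [← Set.ncard_coe_finset]
  congr 1
  ext w
  simp [T]

lemma T_small_card (hdist : ∀ u ∈ F, ∀ v ∈ F, u ≠ v → 8 ≤ hammingDist u v)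
    (hne : F.Nonempty) {u v : Word 24} (hu : u ∈ F) {i j t : ℕ}
    (hvu : hammingDist v u = i) (hj1 : 1 ≤ j) (hj : j ≤ 3) (h8 : i + j + 2 < 8)
    (ht : 2 + 2 * t = i + j) (htj : t ≤ j) :
    (T F v j).card = Nat.choose i t * Nat.choose (24 - i) (j - t) := by
  rw [T_small hdist hne hu hvu hj1 hj h8 ht,
    Finset.card_image_of_injective _ (ind_inj u),
    card_inter_filter _ _ _ htj,
    show (spt (v + u)).card = i by rw [← dist_eq]; exact hvu]

lemma row0 (hcard : F.ncard = 2 ^ 12) (heven : ∀ u ∈ F, Even (hammingDist u 0))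
    (hdist : ∀ u ∈ F, ∀ v ∈ F, u ≠ v → 8 ≤ hammingDist u v)
    (hcov : ∀ v : Word 24, ∃ u ∈ F, hammingDist v u ≤ 4)
    {v : Word 24} (hv : distTo F v = 0) :
    (T F v 0).card = 0 ∧ (T F v 1).card = 0 ∧ (T F v 2).card = 276 ∧
      (T F v 3).card = 0 ∧ (T F v 4).card = 0 := by
  have hne := F_nonempty hcard
  have hvF : v ∈ F := mem_of_distTo_eq_zero hne hv
  have h0 : (T F v 0).card = 0 := by
    rw [Finset.card_eq_zero, Finset.eq_empty_iff_forall_notMem]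
    intro w hw
    simp only [T, mem_filter, mem_univ, true_and] at hw
    have hwF : w ∈ F := mem_of_distTo_eq_zero hne hw.2
    have := code_eq hdist hvF hwF (by omega)
    rw [← this] at hw
    simp at hw
  have h4 : (T F v 4).card = 0 := by
    rw [Finset.card_eq_zero, Finset.eq_empty_iff_forall_notMem]
    intro w hw
    simp only [T, mem_filter, mem_univ, true_and] at hw
    have := distTo_le hvF w
    rw [hammingDist_comm] at this
    omega
  have h1 : (T F v 1).card = 0 := Tparity hcard heven (by rw [hv])
  have h3 : (T F v 3).card = 0 := Tparity hcard heven (by rw [hv])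
  have hsum := Tsum hcov (F := F) v
  exact ⟨h0, h1, by omega, h3, h4⟩

lemma row1 (hcard : F.ncard = 2 ^ 12) (heven : ∀ u ∈ F, Even (hammingDist u 0))
    (hdist : ∀ u ∈ F, ∀ v ∈ F, u ≠ v → 8 ≤ hammingDist u v)
    (hcov : ∀ v : Word 24, ∃ u ∈ F, hammingDist v u ≤ 4)
    {v : Word 24} (hv : distTo F v = 1) :
    (T F v 0).card = 0 ∧ (T F v 1).card = 23 ∧ (T F v 2).card = 0 ∧
      (T F v 3).card = 253 ∧ (T F v 4).card = 0 := by
  have hne := F_nonempty hcard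
  obtain ⟨u, hu, hd⟩ := exists_attain hne v
  rw [hv] at hd
  have h0 : (T F v 0).card = 0 := Tparity hcard heven (by rw [hv])
  have h2 : (T F v 2).card = 0 := Tparity hcard heven (by rw [hv])
  have h4 : (T F v 4).card = 0 := Tparity hcard heven (by rw [hv])
  have h1 : (T F v 1).card = 23 := by
    rw [T_small_card (t := 0) hdist hne hu hd (by norm_num) (by norm_num) (by norm_num)
      (by norm_num) (by norm_num)]
    decide
  have hsum := Tsum hcov (F := F) v
  exact ⟨h0, h1, h2, by omega, h4⟩

lemma row2 (hcard : F.ncard = 2 ^ 12) (heven : ∀ u ∈ F, Even (hammingDist u 0))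
    (hdist : ∀ u ∈ F, ∀ v ∈ F, u ≠ v → 8 ≤ hammingDist u v)
    (hcov : ∀ v : Word 24, ∃ u ∈ F, hammingDist v u ≤ 4)
    {v : Word 24} (hv : distTo F v = 2) :
    (T F v 0).card = 1 ∧ (T F v 1).card = 0 ∧ (T F v 2).card = 44 ∧
      (T F v 3).card = 0 ∧ (T F v 4).card = 231 := by
  have hne := F_nonempty hcard
  obtain ⟨u, hu, hd⟩ := exists_attain hne v
  rw [hv] at hd
  have h1 : (T F v 1).card = 0 := Tparity hcard heven (by rw [hv])
  have h3 : (T F v 3).card = 0 := Tparity hcard heven (by rw [hv])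
  have h0 : (T F v 0).card = 1 := by
    have : T F v 0 = {u} := by
      ext w
      simp only [T, mem_filter, mem_univ, true_and, Finset.mem_singleton]
      constructor
      · rintro ⟨hd2, hw0⟩
        have hwF : w ∈ F := mem_of_distTo_eq_zero hne hw0
        exact near_unique (v := v) hdist hwF hu (by omega)
      · intro hwu
        rw [hwu]
        refine ⟨hd, ?_⟩
        have h1 := distTo_le hu u
        simp only [hammingDist_self] at h1
        omega
    rw [this, Finset.card_singleton]
  have h2 : (T F v 2).card = 44 := by
    rw [T_small_card (t := 1) hdist hne hu hd (by norm_num) (by norm_num) (by norm_num)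
      (by norm_num) (by norm_num)]
    decide
  have hsum := Tsum hcov (F := F) v
  exact ⟨h0, h1, h2, h3, by omega⟩

lemma row3 (hcard : F.ncard = 2 ^ 12) (heven : ∀ u ∈ F, Even (hammingDist u 0))
    (hdist : ∀ u ∈ F, ∀ v ∈ F, u ≠ v → 8 ≤ hammingDist u v)
    (hcov : ∀ v : Word 24, ∃ u ∈ F, hammingDist v u ≤ 4)
    {v : Word 24} (hv : distTo F v = 3) :
    (T F v 0).card = 0 ∧ (T F v 1).card = 3 ∧ (T F v 2).card = 0 ∧
      (T F v 3).card = 273 ∧ (T F v 4).card = 0 := by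
  have hne := F_nonempty hcard
  obtain ⟨u, hu, hd⟩ := exists_attain hne v
  rw [hv] at hd
  have h0 : (T F v 0).card = 0 := Tparity hcard heven (by rw [hv])
  have h2 : (T F v 2).card = 0 := Tparity hcard heven (by rw [hv])
  have h4 : (T F v 4).card = 0 := Tparity hcard heven (by rw [hv])
  have h1 : (T F v 1).card = 3 := by
    rw [T_small_card (t := 1) hdist hne hu hd (by norm_num) (by norm_num) (by norm_num)
      (by norm_num) (by norm_num)]
    decide
  have hsum := Tsum hcov (F := F) v
  exact ⟨h0, h1, h2, by omega, h4⟩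

lemma row4 (hcard : F.ncard = 2 ^ 12) (heven : ∀ u ∈ F, Even (hammingDist u 0))
    (hdist : ∀ u ∈ F, ∀ v ∈ F, u ≠ v → 8 ≤ hammingDist u v)
    (hcov : ∀ v : Word 24, ∃ u ∈ F, hammingDist v u ≤ 4)
    {v : Word 24} (hv : distTo F v = 4) :
    (T F v 0).card = 0 ∧ (T F v 1).card = 0 ∧ (T F v 2).card = 36 ∧
      (T F v 3).card = 0 ∧ (T F v 4).card = 240 := by
  have hne := F_nonempty hcard
  have h1 : (T F v 1).card = 0 := Tparity hcard heven (by rw [hv])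
  have h3 : (T F v 3).card = 0 := Tparity hcard heven (by rw [hv])
  have h0 : (T F v 0).card = 0 := by
    rw [Finset.card_eq_zero, Finset.eq_empty_iff_forall_notMem]
    intro w hw
    simp only [T, mem_filter, mem_univ, true_and] at hw
    have hwF : w ∈ F := mem_of_distTo_eq_zero hne hw.2
    have := distTo_le hwF v
    omega
  have h2 : (T F v 2).card = 36 := T2_row4 hcard hdist hcov hv
  have hsum := Tsum hcov (F := F) v
  exact ⟨h0, h1, h2, h3, by omega⟩

end GolayAux


open GolayAux

/-- The distance coloring of an extended binary Golay code `F` is a perfect coloring of the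
distance-2 graph `HH(24)` (adjacency: Hamming distance exactly 2) with the parameter matrix
`golayMatrixHH`: it is surjective onto the colors `{0,…,4}`, and every word `v` of color
`i = distTo F v` has, for each color `j`, exactly `golayMatrixHH i j` neighbors of color `j`. -/
theorem golay_distance_coloring_HH24
    (F : Set (Word 24)) (hcard : F.ncard = 2 ^ 12)
    (heven : ∀ u ∈ F, Even (hammingDist u 0))
    (hdist : ∀ u ∈ F, ∀ v ∈ F, u ≠ v → 8 ≤ hammingDist u v)
    (hcov : ∀ v : Word 24, ∃ u ∈ F, hammingDist v u ≤ 4) :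
    (∀ j : Fin 5, ∃ v : Word 24, distTo F v = j) ∧
    (∀ v : Word 24, ∃ i : Fin 5, distTo F v = i ∧
      ∀ j : Fin 5,
        {w | hammingDist v w = 2 ∧ distTo F w = j}.ncard = golayMatrixHH i j) := by
  have hne := F_nonempty hcard
  obtain ⟨u0, hu0⟩ := hne
  constructor
  · intro j
    have hsmall : ∀ k : ℕ, k ≤ 3 → ∃ v : Word 24, distTo F v = k := by
      intro k hk
      obtain ⟨s, -, hs⟩ := Finset.exists_subset_card_eq
        (show k ≤ (univ : Finset (Fin 24)).card by rw [card_univ, Fintype.card_fin]; omega)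
      refine ⟨u0 + ind s, ?_⟩
      have hd : hammingDist (u0 + ind s) u0 = k := by
        rw [hammingDist_comm, wdist_add_right, wt_eq, spt_ind, hs]
      rw [distTo_close hdist ⟨u0, hu0⟩ hu0 (by omega), hd]
    fin_cases j
    · exact hsmall 0 (by norm_num)
    · exact hsmall 1 (by norm_num)
    · exact hsmall 2 (by norm_num)
    · exact hsmall 3 (by norm_num)
    · have hpos : 0 < (Dj F 4).card := by
        rw [D4_card hcard hdist hcov]; norm_num
      obtain ⟨x, hx⟩ := Finset.card_pos.mp hpos
      simp only [Dj, mem_filter, mem_univ, true_and] at hx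
      exact ⟨x, hx⟩
  · intro v
    have h4 := distTo_le_four hcov v
    have hcases : distTo F v = 0 ∨ distTo F v = 1 ∨ distTo F v = 2 ∨ distTo F v = 3 ∨
        distTo F v = 4 := by omega
    rcases hcases with h | h | h | h | h
    · obtain ⟨c0, c1, c2, c3, c4⟩ := row0 hcard heven hdist hcov h
      refine ⟨0, by simpa using h, ?_⟩
      intro j
      fin_cases j <;> simp [ncard_T, golayMatrixHH, Matrix.vecHead, Matrix.vecTail, c0, c1, c2, c3, c4]
    · obtain ⟨c0, c1, c2, c3, c4⟩ := row1 hcard heven hdist hcov h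
      refine ⟨1, by simpa using h, ?_⟩
      intro j
      fin_cases j <;> simp [ncard_T, golayMatrixHH, Matrix.vecHead, Matrix.vecTail, c0, c1, c2, c3, c4]
    · obtain ⟨c0, c1, c2, c3, c4⟩ := row2 hcard heven hdist hcov h
      refine ⟨2, by simpa using h, ?_⟩
      intro j
      fin_cases j <;> simp [ncard_T, golayMatrixHH, Matrix.vecHead, Matrix.vecTail, c0, c1, c2, c3, c4]
    · obtain ⟨c0, c1, c2, c3, c4⟩ := row3 hcard heven hdist hcov h
      refine ⟨3, by simpa using h, ?_⟩
      intro j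
      fin_cases j <;> simp [ncard_T, golayMatrixHH, Matrix.vecHead, Matrix.vecTail, c0, c1, c2, c3, c4]
    · obtain ⟨c0, c1, c2, c3, c4⟩ := row4 hcard heven hdist hcov h
      refine ⟨4, by simpa using h, ?_⟩
      intro j
      fin_cases j <;> simp [ncard_T, golayMatrixHH, Matrix.vecHead, Matrix.vecTail, c0, c1, c2, c3, c4]
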